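/- arXiv:1003.2619 — 4 statements merged into one kernel-verified Lean document; each statement's English description precedes it below -/
import Mathlib

section
/- The inverse-probability-weighting identity: under ignorability given a finite covariate X and overlap, E[ T·Y / e(X) ] = E[Y1], where e(x) = P(T=1 | X=x) is the propensity score. -/
open MeasureTheory ProbabilityTheory

/-- Inverse probability weighting: under ignorability given a finite covariate `X`
and overlap, `E[T·Y/e(X)] = E[Y1]` where `e` is the propensity score. -/
theorem ipw_identity
    {Ω : Type*} [MeasurableSpace Ω] (μ : Measure Ω) [IsProbabilityMeasure μ]
    {S : Type*} [Fintype S] [MeasurableSpace S] [MeasurableSingletonClass S]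
    (X : Ω → S) (T : Ω → Bool) (Y0 Y1 : Ω → ℝ)
    (hX : Measurable X) (hT : Measurable T)
    (hY0 : Integrable Y0 μ) (hY1 : Integrable Y1 μ) (hY1m : Measurable Y1)
    -- propensity score
    (e : S → ℝ)
    (he : ∀ x : S, e x = (μ {ω | T ω = true ∧ X ω = x}).toReal / (μ {ω | X ω = x}).toReal)
    -- overlap
    (hoverlap : ∀ x : S, 0 < μ {ω | X ω = x} → 0 < e x ∧ e x < 1)
    -- ignorability: T independent of Y1 conditionally on each event {X = x}
    (hignor : ∀ x : S, 0 < μ {ω | X ω = x} → IndepFun T Y1 (μ[|{ω | X ω = x}]))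
    (Y : Ω → ℝ) (hY : ∀ ω, Y ω = if T ω = true then Y1 ω else Y0 ω) :
    (∫ ω, (if T ω = true then Y ω / e (X ω) else 0) ∂μ) = ∫ ω, Y1 ω ∂μ := by
  classical
  set A : S → Set Ω := fun x => {ω | X ω = x} with hA
  have hApre : ∀ x, A x = X ⁻¹' {x} := by intro x; ext ω; simp [hA]
  have hAm : ∀ x, MeasurableSet (A x) := fun x => by
    rw [hApre]; exact hX (measurableSet_singleton x)
  have hTm : MeasurableSet {ω | T ω = true} := hT (measurableSet_singleton true)
  set g : Ω → ℝ := fun ω => if T ω = true then (1:ℝ) else 0 with hg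
  have hgm : Measurable g := Measurable.ite hTm measurable_const measurable_const
  have hgind : g = Set.indicator {ω | T ω = true} (fun _ => (1:ℝ)) := by
    funext ω; by_cases h : T ω = true <;> simp [hg, h, Set.indicator_apply]
  have hgY1 : Integrable (fun ω => g ω * Y1 ω) μ := by
    refine hY1.mono ((hgm.mul hY1m).aestronglyMeasurable) ?_
    filter_upwards with ω
    by_cases h : T ω = true <;> simp [hg, h, abs_mul]
  -- the integrand with Y1 and pointwise propensity
  set F : Ω → ℝ := fun ω => if T ω = true then Y1 ω / e (X ω) else 0 with hF
  have hFeq : (fun ω => if T ω = true then Y ω / e (X ω) else 0) = F := by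
    funext ω; by_cases h : T ω = true <;> simp [hF, h, hY]
  -- on A x, F equals a fixed-x version
  have hFx : ∀ x : S, Set.EqOn (fun ω => (e x)⁻¹ * (g ω * Y1 ω)) F (A x) := by
    intro x ω hω
    simp only [hA, Set.mem_setOf_eq] at hω
    by_cases h : T ω = true <;> simp [hF, h, hω, hg, div_eq_inv_mul]
  have hFint : ∀ x : S, IntegrableOn F (A x) μ := by
    intro x
    exact (((hgY1.const_mul ((e x)⁻¹)).integrableOn)).congr_fun (hFx x) (hAm x)
  -- key per-stratum identity
  have key : ∀ x : S, ∫ ω in A x, F ω ∂μ = ∫ ω in A x, Y1 ω ∂μ := by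
    intro x
    by_cases hp : 0 < μ (A x)
    · -- positive-mass stratum
      have hp0 : μ (A x) ≠ 0 := hp.ne'
      have hpt : μ (A x) ≠ ⊤ := measure_ne_top μ _
      have hptR : (μ (A x)).toReal ≠ 0 := by
        simp [ENNReal.toReal_ne_zero, hp0, hpt]
      have hprob : IsProbabilityMeasure (μ[|A x]) := cond_isProbabilityMeasure hp0
      -- conditional-measure integral formula
      have hcondint : ∀ f : Ω → ℝ,
          ∫ ω, f ω ∂(μ[|A x]) = (μ (A x)).toReal⁻¹ * ∫ ω in A x, f ω ∂μ := by
        intro f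
        rw [ProbabilityTheory.cond, integral_smul_measure, ENNReal.toReal_inv, smul_eq_mul]
      -- conditional expectation of g is e x
      have hcondT : (μ[|A x]) {ω | T ω = true} = (μ (A x))⁻¹ * μ {ω | T ω = true ∧ X ω = x} := by
        have hset : A x ∩ {ω | T ω = true} = {ω | T ω = true ∧ X ω = x} := by
          ext ω; simp [hA, and_comm]
        rw [cond_apply (hAm x), hset]
      have hEg : ∫ ω, g ω ∂(μ[|A x]) = e x := by
        rw [hgind, integral_indicator_const (1:ℝ) hTm, measureReal_def, hcondT, he x]
        simp only [smul_eq_mul, mul_one]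
        rw [ENNReal.toReal_mul, ENNReal.toReal_inv, inv_mul_eq_div]
      -- independence transported to g
      have hindep : IndepFun g Y1 (μ[|A x]) := by
        have h := (hignor x hp).comp (φ := fun b : Bool => if b = true then (1:ℝ) else 0)
          (ψ := id) (measurable_of_countable (fun b : Bool => if b = true then (1:ℝ) else 0)) measurable_id
        exact h
      have hY1c : Integrable Y1 (μ[|A x]) := by
        rw [ProbabilityTheory.cond]
        exact (hY1.restrict).smul_measure (ENNReal.inv_ne_top.mpr hp0)
      have hgc : Integrable g (μ[|A x]) := by
        rw [hgind]
        exact (integrable_const (1:ℝ)).indicator hTm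
      have hmul : ∫ ω, g ω * Y1 ω ∂(μ[|A x])
          = (∫ ω, g ω ∂(μ[|A x])) * ∫ ω, Y1 ω ∂(μ[|A x]) :=
        hindep.integral_fun_mul_eq_mul_integral hgc.aestronglyMeasurable hY1c.aestronglyMeasurable
      have hex : e x ≠ 0 := (hoverlap x hp).1.ne'
      -- put it together
      have h1 : ∫ ω in A x, F ω ∂μ = (e x)⁻¹ * ∫ ω in A x, g ω * Y1 ω ∂μ := by
        rw [← setIntegral_congr_fun (hAm x) (hFx x), integral_const_mul]
      have h2 : ∫ ω in A x, g ω * Y1 ω ∂μ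
          = (μ (A x)).toReal * ∫ ω, g ω * Y1 ω ∂(μ[|A x]) := by
        rw [hcondint]; field_simp
      have h3 : ∫ ω in A x, Y1 ω ∂μ = (μ (A x)).toReal * ∫ ω, Y1 ω ∂(μ[|A x]) := by
        rw [hcondint]; field_simp
      rw [h1, h2, hmul, hEg, h3]
      field_simp
    · -- null stratum
      have h0 : μ (A x) = 0 := by
        by_contra h
        exact hp (lt_of_le_of_ne zero_le (Ne.symm h))
      rw [Measure.restrict_eq_zero.mpr h0]
      simp
  -- decompose the total integral over strata
  have hUnion : (⋃ x : S, A x) = Set.univ := by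
    ext ω; simp [hA]
  have hdisj : Pairwise (Function.onFun Disjoint A) := by
    intro x y hxy
    simp only [Function.onFun, Set.disjoint_left]
    intro ω hω hω'
    simp only [hA, Set.mem_setOf_eq] at hω hω'
    exact hxy (hω ▸ hω')
  have hsplit : ∀ (f : Ω → ℝ), (∀ x, IntegrableOn f (A x) μ) →
      ∫ ω, f ω ∂μ = ∑ x : S, ∫ ω in A x, f ω ∂μ := by
    intro f hf
    rw [← setIntegral_univ (f := f) (μ := μ), ← hUnion]
    exact integral_iUnion_fintype hAm hdisj hf
  rw [hFeq, hsplit F hFint, hsplit Y1 (fun x => hY1.integrableOn)]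
  exact Finset.sum_congr rfl (fun x _ => key x)
end

section
/- LATE theorem for binary instrument and no defiers: with potential treatments T(0) ≤ T(1) (monotonicity), exclusion (Y depends on Z only through T), and Z independent of all potential outcomes and potential treatments, the Wald ratio (E[Y|Z=1]-E[Y|Z=0])/(E[T|Z=1]-E[T|Z=0]) equals E[Y1 - Y0 | T(1) > T(0)], provided P(T(1) > T(0)) > 0. -/
open MeasureTheory ProbabilityTheory

/-- Conditional expectation of `f` given the event `A`, defined as a ratio. -/
noncomputable def condMean {Ω : Type*} [MeasurableSpace Ω] (μ : Measure Ω)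
    (A : Set Ω) (f : Ω → ℝ) : ℝ := (∫ ω in A, f ω ∂μ) / (μ A).toReal

private lemma indep_setIntegral {Ω : Type*} [MeasurableSpace Ω] (μ : Measure Ω)
    [IsProbabilityMeasure μ] (Z : Ω → Bool) (W : Ω → Bool × Bool × ℝ × ℝ)
    (hZ : Measurable Z) (hind : IndepFun Z W μ)
    (φ : Bool × Bool × ℝ × ℝ → ℝ) (hφ : Measurable φ)
    (hint : Integrable (fun ω => φ (W ω)) μ) (b : Bool) :
    ∫ ω in {ω | Z ω = b}, φ (W ω) ∂μ = (μ {ω | Z ω = b}).toReal * ∫ ω, φ (W ω) ∂μ := by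
  have hSm : MeasurableSet {ω | Z ω = b} := hZ (measurableSet_singleton b)
  set ι : Bool → ℝ := fun z => if z = b then 1 else 0 with hι
  have hιm : Measurable ι := measurable_from_top
  have h1 : IndepFun (fun ω => ι (Z ω)) (fun ω => φ (W ω)) μ := hind.comp hιm hφ
  have hιeq : (fun ω => ι (Z ω)) = Set.indicator {ω | Z ω = b} (fun _ => (1 : ℝ)) := by
    funext ω
    by_cases h : Z ω = b <;> simp [hι, h, Set.indicator]
  have hιint : Integrable (fun ω => ι (Z ω)) μ := by
    rw [hιeq]; exact (integrable_const 1).indicator hSm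
  have key : ∫ ω, ι (Z ω) * φ (W ω) ∂μ =
      (∫ ω, ι (Z ω) ∂μ) * ∫ ω, φ (W ω) ∂μ :=
    h1.integral_fun_mul_eq_mul_integral hιint.aestronglyMeasurable hint.aestronglyMeasurable
  have h2 : ∫ ω in {ω | Z ω = b}, φ (W ω) ∂μ = ∫ ω, ι (Z ω) * φ (W ω) ∂μ := by
    rw [← integral_indicator hSm]
    congr 1
    funext ω
    by_cases h : Z ω = b <;> simp [hι, h, Set.indicator]
  have h3 : ∫ ω, ι (Z ω) ∂μ = (μ {ω | Z ω = b}).toReal := by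
    rw [hιeq, integral_indicator hSm]
    simp [measureReal_def]
  rw [h2, key, h3]

/-- LATE theorem: with a binary instrument, monotonicity (no defiers), exclusion,
independence, and a positive share of compliers, the Wald ratio equals the
average treatment effect among compliers. -/
theorem late_theorem
    {Ω : Type*} [MeasurableSpace Ω] (μ : Measure Ω) [IsProbabilityMeasure μ]
    (Z T0 T1 : Ω → Bool) (Y0 Y1 : Ω → ℝ)
    (hZ : Measurable Z) (hT0 : Measurable T0) (hT1 : Measurable T1)
    (hY0 : Integrable Y0 μ) (hY1 : Integrable Y1 μ)
    (hY0m : Measurable Y0) (hY1m : Measurable Y1)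
    (hZpos : 0 < μ {ω | Z ω = true}) (hZlt : μ {ω | Z ω = true} < 1)
    -- monotonicity: no defiers
    (hmono : ∀ ω, T0 ω = true → T1 ω = true)
    -- independence of the instrument from all potential quantities
    (hind : IndepFun Z (fun ω => (T0 ω, T1 ω, Y0 ω, Y1 ω)) μ)
    -- positive probability of compliers
    (hcompl : 0 < μ {ω | T1 ω = true ∧ T0 ω = false})
    -- observed treatment and outcome (exclusion: Y depends on Z only through T)
    (T : Ω → Bool) (hT : ∀ ω, T ω = if Z ω = true then T1 ω else T0 ω)
    (Y : Ω → ℝ) (hY : ∀ ω, Y ω = if T ω = true then Y1 ω else Y0 ω)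
    (Tr : Ω → ℝ) (hTr : ∀ ω, Tr ω = if T ω = true then 1 else 0) :
    (condMean μ {ω | Z ω = true} Y - condMean μ {ω | Z ω = false} Y) /
      (condMean μ {ω | Z ω = true} Tr - condMean μ {ω | Z ω = false} Tr) =
    condMean μ {ω | T1 ω = true ∧ T0 ω = false} (fun ω => Y1 ω - Y0 ω) := by
  classical
  set W : Ω → Bool × Bool × ℝ × ℝ := fun ω => (T0 ω, T1 ω, Y0 ω, Y1 ω) with hW
  -- φ0/φ1: outcome under control / treatment assignment; ψ0/ψ1: treatment indicators
  set φ1 : Bool × Bool × ℝ × ℝ → ℝ := fun q => if q.2.1 = true then q.2.2.2 else q.2.2.1 with hφ1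
  set φ0 : Bool × Bool × ℝ × ℝ → ℝ := fun q => if q.1 = true then q.2.2.2 else q.2.2.1 with hφ0
  set ψ1 : Bool × Bool × ℝ × ℝ → ℝ := fun q => if q.2.1 = true then 1 else 0 with hψ1
  set ψ0 : Bool × Bool × ℝ × ℝ → ℝ := fun q => if q.1 = true then 1 else 0 with hψ0
  have hT1s : MeasurableSet {ω | T1 ω = true} := hT1 (measurableSet_singleton true)
  have hT0s : MeasurableSet {ω | T0 ω = true} := hT0 (measurableSet_singleton true)
  set C : Set Ω := {ω | T1 ω = true ∧ T0 ω = false} with hC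
  have hCm : MeasurableSet C :=
    (hT1 (measurableSet_singleton true)).inter (hT0 (measurableSet_singleton false))
  -- measurability of the φ's
  have hq1 : MeasurableSet {q : Bool × Bool × ℝ × ℝ | q.2.1 = true} :=
    (measurable_fst.comp measurable_snd) (measurableSet_singleton true)
  have hq0 : MeasurableSet {q : Bool × Bool × ℝ × ℝ | q.1 = true} :=
    measurable_fst (measurableSet_singleton true)
  have hy1 : Measurable fun q : Bool × Bool × ℝ × ℝ => q.2.2.2 :=
    measurable_snd.comp (measurable_snd.comp measurable_snd)
  have hy0 : Measurable fun q : Bool × Bool × ℝ × ℝ => q.2.2.1 :=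
    measurable_fst.comp (measurable_snd.comp measurable_snd)
  have hφ1m : Measurable φ1 := Measurable.ite hq1 hy1 hy0
  have hφ0m : Measurable φ0 := Measurable.ite hq0 hy1 hy0
  have hψ1m : Measurable ψ1 := Measurable.ite hq1 measurable_const measurable_const
  have hψ0m : Measurable ψ0 := Measurable.ite hq0 measurable_const measurable_const
  -- integrability
  have hint1 : Integrable (fun ω => φ1 (W ω)) μ := by
    have : (fun ω => φ1 (W ω)) =
        Set.indicator {ω | T1 ω = true} Y1 + Set.indicator {ω | T1 ω = true}ᶜ Y0 := by
      funext ω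
      by_cases h : T1 ω = true <;> simp [hφ1, hW, h, Set.indicator]
    rw [this]
    exact (hY1.indicator hT1s).add (hY0.indicator hT1s.compl)
  have hint0 : Integrable (fun ω => φ0 (W ω)) μ := by
    have : (fun ω => φ0 (W ω)) =
        Set.indicator {ω | T0 ω = true} Y1 + Set.indicator {ω | T0 ω = true}ᶜ Y0 := by
      funext ω
      by_cases h : T0 ω = true <;> simp [hφ0, hW, h, Set.indicator]
    rw [this]
    exact (hY1.indicator hT0s).add (hY0.indicator hT0s.compl)
  have hintψ1 : Integrable (fun ω => ψ1 (W ω)) μ := by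
    have : (fun ω => ψ1 (W ω)) = Set.indicator {ω | T1 ω = true} (fun _ => (1 : ℝ)) := by
      funext ω
      by_cases h : T1 ω = true <;> simp [hψ1, hW, h, Set.indicator]
    rw [this]
    exact (integrable_const 1).indicator hT1s
  have hintψ0 : Integrable (fun ω => ψ0 (W ω)) μ := by
    have : (fun ω => ψ0 (W ω)) = Set.indicator {ω | T0 ω = true} (fun _ => (1 : ℝ)) := by
      funext ω
      by_cases h : T0 ω = true <;> simp [hψ0, hW, h, Set.indicator]
    rw [this]
    exact (integrable_const 1).indicator hT0s
  -- the probabilities of the instrument events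
  have hS1m : MeasurableSet {ω | Z ω = true} := hZ (measurableSet_singleton true)
  have hS0m : MeasurableSet {ω | Z ω = false} := hZ (measurableSet_singleton false)
  have hS0c : {ω | Z ω = false} = {ω | Z ω = true}ᶜ := by
    ext ω; simp
  have hμ1ne : μ {ω | Z ω = true} ≠ ⊤ := measure_ne_top μ _
  have hp1 : (0 : ℝ) < (μ {ω | Z ω = true}).toReal :=
    ENNReal.toReal_pos hZpos.ne' hμ1ne
  have hμ0 : μ {ω | Z ω = false} = 1 - μ {ω | Z ω = true} := by
    rw [hS0c, measure_compl hS1m hμ1ne, measure_univ]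
  have hp0 : (0 : ℝ) < (μ {ω | Z ω = false}).toReal := by
    apply ENNReal.toReal_pos _ (measure_ne_top μ _)
    rw [hμ0]
    simp only [ne_eq, tsub_eq_zero_iff_le, not_le]
    exact hZlt
  -- conditional means of Y
  have hY1eq : condMean μ {ω | Z ω = true} Y = ∫ ω, φ1 (W ω) ∂μ := by
    unfold condMean
    have : ∫ ω in {ω | Z ω = true}, Y ω ∂μ = ∫ ω in {ω | Z ω = true}, φ1 (W ω) ∂μ := by
      apply setIntegral_congr_fun hS1m
      intro ω hω
      simp only [Set.mem_setOf_eq] at hω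
      simp [hY ω, hT ω, hω, hφ1, hW]
    rw [this, indep_setIntegral μ Z W hZ hind φ1 hφ1m hint1 true]
    exact mul_div_cancel_left₀ _ hp1.ne'
  have hY0eq : condMean μ {ω | Z ω = false} Y = ∫ ω, φ0 (W ω) ∂μ := by
    unfold condMean
    have : ∫ ω in {ω | Z ω = false}, Y ω ∂μ = ∫ ω in {ω | Z ω = false}, φ0 (W ω) ∂μ := by
      apply setIntegral_congr_fun hS0m
      intro ω hω
      simp only [Set.mem_setOf_eq] at hω
      simp [hY ω, hT ω, hω, hφ0, hW]
    rw [this, indep_setIntegral μ Z W hZ hind φ0 hφ0m hint0 false]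
    exact mul_div_cancel_left₀ _ hp0.ne'
  -- conditional means of Tr
  have hTr1eq : condMean μ {ω | Z ω = true} Tr = ∫ ω, ψ1 (W ω) ∂μ := by
    unfold condMean
    have : ∫ ω in {ω | Z ω = true}, Tr ω ∂μ = ∫ ω in {ω | Z ω = true}, ψ1 (W ω) ∂μ := by
      apply setIntegral_congr_fun hS1m
      intro ω hω
      simp only [Set.mem_setOf_eq] at hω
      simp [hTr ω, hT ω, hω, hψ1, hW]
    rw [this, indep_setIntegral μ Z W hZ hind ψ1 hψ1m hintψ1 true]
    exact mul_div_cancel_left₀ _ hp1.ne'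
  have hTr0eq : condMean μ {ω | Z ω = false} Tr = ∫ ω, ψ0 (W ω) ∂μ := by
    unfold condMean
    have : ∫ ω in {ω | Z ω = false}, Tr ω ∂μ = ∫ ω in {ω | Z ω = false}, ψ0 (W ω) ∂μ := by
      apply setIntegral_congr_fun hS0m
      intro ω hω
      simp only [Set.mem_setOf_eq] at hω
      simp [hTr ω, hT ω, hω, hψ0, hW]
    rw [this, indep_setIntegral μ Z W hZ hind ψ0 hψ0m hintψ0 false]
    exact mul_div_cancel_left₀ _ hp0.ne'
  -- numerator: difference equals the complier integral of the treatment effect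
  have hnum : (∫ ω, φ1 (W ω) ∂μ) - ∫ ω, φ0 (W ω) ∂μ =
      ∫ ω in C, (Y1 ω - Y0 ω) ∂μ := by
    rw [← integral_sub hint1 hint0, ← integral_indicator hCm]
    congr 1
    funext ω
    by_cases h1 : T1 ω = true <;> by_cases h0 : T0 ω = true
    · simp [hφ1, hφ0, hW, hC, h1, h0, Set.indicator]
    · have h0' : T0 ω = false := by simpa using h0
      simp [hφ1, hφ0, hW, hC, h1, h0', Set.indicator]
    · exact absurd (hmono ω h0) h1
    · have h1' : T1 ω = false := by simpa using h1
      simp [hφ1, hφ0, hW, hC, h1', h0, Set.indicator]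
  -- denominator: difference equals the complier probability
  have hden : (∫ ω, ψ1 (W ω) ∂μ) - ∫ ω, ψ0 (W ω) ∂μ = (μ C).toReal := by
    rw [← integral_sub hintψ1 hintψ0]
    have : (fun ω => ψ1 (W ω) - ψ0 (W ω)) = Set.indicator C (fun _ => (1 : ℝ)) := by
      funext ω
      by_cases h1 : T1 ω = true <;> by_cases h0 : T0 ω = true
      · simp [hψ1, hψ0, hW, hC, h1, h0, Set.indicator]
      · have h0' : T0 ω = false := by simpa using h0
        simp [hψ1, hψ0, hW, hC, h1, h0', Set.indicator]
      · exact absurd (hmono ω h0) h1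
      · have h1' : T1 ω = false := by simpa using h1
        simp [hψ1, hψ0, hW, hC, h1', h0, Set.indicator]
    rw [this, integral_indicator hCm]
    simp [measureReal_def]
  rw [hY1eq, hY0eq, hTr1eq, hTr0eq, hnum, hden]
  rfl
end

section
/- Back-door adjustment formula for the fork: in the structural model Z = U_Z, X = f(Z,U_X), Y = g(X,Z,U_Y) with independent noises, P(Y=y | do(X=x)) = Σ_z P(Z=z) · P(Y=y | X=x, Z=z), for all z with P(X=x, Z=z) > 0. -/
open MeasureTheory ProbabilityTheory

private lemma hmeas {α : Type*} [MeasurableSpace α] [MeasurableSingletonClass α] [Finite α]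
    (s : Set α) : MeasurableSet s := (Set.toFinite s).measurableSet

/-- Back-door adjustment for the fork/confounded model `Z = U_Z`, `X = f(Z,U_X)`,
`Y = g(X,Z,U_Y)` with independent noises:
`P(Y=y | do(X=x)) = Σ_z P(Z=z) · P(Y=y | X=x, Z=z)`. -/
theorem backdoor_adjustment
    {Ω : Type*} [MeasurableSpace Ω] (μ : Measure Ω) [IsProbabilityMeasure μ]
    {SZ SX SY NX NY : Type*} [Fintype SZ] [Fintype SX] [Fintype SY]
    [Fintype NX] [Fintype NY]
    [MeasurableSpace SZ] [MeasurableSingletonClass SZ]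
    [MeasurableSpace NX] [MeasurableSingletonClass NX]
    [MeasurableSpace NY] [MeasurableSingletonClass NY]
    (UZ : Ω → SZ) (UX : Ω → NX) (UY : Ω → NY)
    (hUZ : Measurable UZ) (hUX : Measurable UX) (hUY : Measurable UY)
    -- exogenous noises are mutually independent
    (hind1 : IndepFun UZ (fun ω => (UX ω, UY ω)) μ)
    (hind2 : IndepFun UX UY μ)
    (f : SZ → NX → SX) (g : SX → SZ → NY → SY)
    (Z : Ω → SZ) (hZ : ∀ ω, Z ω = UZ ω)
    (X : Ω → SX) (hX : ∀ ω, X ω = f (Z ω) (UX ω))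
    (Y : Ω → SY) (hY : ∀ ω, Y ω = g (X ω) (Z ω) (UY ω))
    (x : SX)
    -- overlap: positivity of P(X = x, Z = z) on the support of Z
    (hoverlap : ∀ z : SZ, 0 < μ {ω | Z ω = z} → 0 < μ {ω | X ω = x ∧ Z ω = z})
    -- outcome under the intervention do(X = x)
    (Ydo : Ω → SY) (hYdo : ∀ ω, Ydo ω = g x (Z ω) (UY ω)) :
    ∀ y : SY,
      μ {ω | Ydo ω = y} =
        ∑ z : SZ, μ {ω | Z ω = z} *
          (μ {ω | Y ω = y ∧ X ω = x ∧ Z ω = z} / μ {ω | X ω = x ∧ Z ω = z}) := by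
  intro y
  set pZ : SZ → ENNReal := fun z => μ (UZ ⁻¹' {z}) with hpZ
  set pX : SZ → ENNReal := fun z => μ (UX ⁻¹' {a | f z a = x}) with hpX
  set pY : SZ → ENNReal := fun z => μ (UY ⁻¹' {b | g x z b = y}) with hpY
  -- rewrite the three event sets
  have hsetZ : ∀ z : SZ, {ω | Z ω = z} = UZ ⁻¹' {z} := by
    intro z; ext ω; simp [hZ]
  have hsetXZ : ∀ z : SZ, {ω | X ω = x ∧ Z ω = z}
      = UZ ⁻¹' {z} ∩ UX ⁻¹' {a | f z a = x} := by
    intro z; ext ω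
    simp only [Set.mem_setOf_eq, hX, hZ, Set.mem_inter_iff, Set.mem_preimage,
      Set.mem_singleton_iff]
    constructor
    · rintro ⟨h1, h2⟩; subst h2; exact ⟨rfl, h1⟩
    · rintro ⟨h1, h2⟩; subst h1; exact ⟨h2, rfl⟩
  have hsetYXZ : ∀ z : SZ, {ω | Y ω = y ∧ X ω = x ∧ Z ω = z}
      = UZ ⁻¹' {z} ∩ (fun ω => (UX ω, UY ω)) ⁻¹' ({a | f z a = x} ×ˢ {b | g x z b = y}) := by
    intro z; ext ω
    simp only [Set.mem_setOf_eq, hY, hX, hZ, Set.mem_inter_iff, Set.mem_preimage,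
      Set.mem_prod]
    constructor
    · rintro ⟨h1, h2, h3⟩; subst h3; exact ⟨rfl, h2, by rwa [h2] at h1⟩
    · rintro ⟨h1, h2, h3⟩; subst h1; exact ⟨by rwa [h2], h2, rfl⟩
  have hsetYdoZ : ∀ z : SZ, {ω | Ydo ω = y} ∩ UZ ⁻¹' {z}
      = UZ ⁻¹' {z} ∩ (fun ω => (UX ω, UY ω)) ⁻¹' (Set.univ ×ˢ {b | g x z b = y}) := by
    intro z; ext ω
    simp only [Set.mem_setOf_eq, hYdo, hZ, Set.mem_inter_iff, Set.mem_preimage,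
      Set.mem_prod, Set.mem_univ, true_and, Set.mem_singleton_iff]
    constructor
    · rintro ⟨h1, h2⟩; subst h2; exact ⟨rfl, h1⟩
    · rintro ⟨h1, h2⟩; subst h1; exact ⟨h2, rfl⟩
  -- product measurability
  have hmeasP : ∀ (s : Set NX) (t : Set NY), MeasurableSet (s ×ˢ t) :=
    fun s t => (hmeas s).prod (hmeas t)
  -- factorization of joint probabilities
  have hXZ : ∀ z : SZ, μ {ω | X ω = x ∧ Z ω = z} = pZ z * pX z := by
    intro z
    rw [hsetXZ z]
    have := hind1.measure_inter_preimage_eq_mul {z}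
      ({a | f z a = x} ×ˢ Set.univ) (hmeas _) (hmeasP _ _)
    simp [Set.mk_preimage_prod, Set.preimage_univ] at this
    exact this
  have hYXZ : ∀ z : SZ, μ {ω | Y ω = y ∧ X ω = x ∧ Z ω = z} = pZ z * (pX z * pY z) := by
    intro z
    rw [hsetYXZ z]
    rw [hind1.measure_inter_preimage_eq_mul {z} _ (hmeas _) (hmeasP _ _)]
    congr 1
    rw [Set.mk_preimage_prod]
    exact hind2.measure_inter_preimage_eq_mul _ _ (hmeas _) (hmeas _)
  have hYdoZ : ∀ z : SZ, μ ({ω | Ydo ω = y} ∩ UZ ⁻¹' {z}) = pZ z * pY z := by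
    intro z
    rw [hsetYdoZ z]
    have := hind1.measure_inter_preimage_eq_mul {z}
      (Set.univ ×ˢ {b | g x z b = y}) (hmeas _) (hmeasP _ _)
    simpa [Set.mk_preimage_prod, Set.preimage_univ, hpZ, hpY] using this
  -- decompose the LHS over z
  have hLHS : μ {ω | Ydo ω = y} = ∑ z : SZ, pZ z * pY z := by
    have hT : MeasurableSet {ω | Ydo ω = y} := by
      have : {ω | Ydo ω = y} = (fun ω => (UZ ω, UY ω)) ⁻¹' {p | g x p.1 p.2 = y} := by
        ext ω; simp [hYdo, hZ]
      rw [this]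
      exact (hUZ.prodMk hUY) (hmeas _)
    calc μ {ω | Ydo ω = y} = μ.restrict {ω | Ydo ω = y} (UZ ⁻¹' Set.univ) := by
          rw [Set.preimage_univ, Measure.restrict_apply_univ]
      _ = ∑ z : SZ, μ.restrict {ω | Ydo ω = y} (UZ ⁻¹' {z}) := by
          rw [← Finset.coe_univ,
            ← MeasureTheory.sum_measure_preimage_singleton Finset.univ
              (fun z _ => hUZ (measurableSet_singleton z))]
      _ = ∑ z : SZ, pZ z * pY z := by
          refine Finset.sum_congr rfl fun z _ => ?_
          rw [Measure.restrict_apply (hUZ (measurableSet_singleton z)),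
            Set.inter_comm, hYdoZ z]
  rw [hLHS]
  refine Finset.sum_congr rfl fun z _ => ?_
  rw [hsetZ z, hYXZ z, hXZ z]
  by_cases hz : pZ z = 0
  · simp [hz]
  · have hposZ : 0 < μ {ω | Z ω = z} := by rw [hsetZ z]; exact pos_iff_ne_zero.2 hz
    have hposXZ := hoverlap z hposZ
    rw [hXZ z] at hposXZ
    have hne : pZ z * pX z ≠ 0 := hposXZ.ne'
    have hnetop : pZ z * pX z ≠ ⊤ :=
      (lt_of_le_of_lt (le_trans (mul_le_of_le_one_right zero_le prob_le_one)
        prob_le_one) ENNReal.one_lt_top).ne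
    rw [← mul_assoc (pZ z), mul_comm (pZ z * pX z) (pY z), mul_div_assoc,
      ENNReal.div_self hne hnetop, mul_one]
end

section
/- Bounds without ignorability: for binary outcome with Y0, Y1 ∈ {0,1} and binary T with p := P(T=1) ∈ (0,1), the average treatment effect E[Y1] - E[Y0] always lies in the interval [p·E[Y|T=1] - (1-p)·E[Y|T=0] - p, p·E[Y|T=1] + (1-p) - (1-p)·E[Y|T=0]], i.e., the Manski worst-case bounds, an interval of width 1. -/
open MeasureTheory

/-- Manski worst-case bounds: without ignorability, for binary potential
outcomes the ATE lies in an interval of width 1 determined by the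
observable quantities. -/
theorem manski_bounds
    {Ω : Type*} [MeasurableSpace Ω] (μ : Measure Ω) [IsProbabilityMeasure μ]
    (T : Ω → Bool) (Y0 Y1 : Ω → ℝ)
    (hT : Measurable T) (hY0 : Integrable Y0 μ) (hY1 : Integrable Y1 μ)
    (hY0b : ∀ ω, Y0 ω = 0 ∨ Y0 ω = 1) (hY1b : ∀ ω, Y1 ω = 0 ∨ Y1 ω = 1)
    (hpos : 0 < μ {ω | T ω = true}) (hlt : μ {ω | T ω = true} < 1)
    (Y : Ω → ℝ) (hY : ∀ ω, Y ω = if T ω = true then Y1 ω else Y0 ω)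
    (p : ℝ) (hp : p = (μ {ω | T ω = true}).toReal) :
    (∫ ω, Y1 ω ∂μ) - (∫ ω, Y0 ω ∂μ) ∈ Set.Icc
      (p * condMean μ {ω | T ω = true} Y -
        (1 - p) * condMean μ {ω | T ω = false} Y - p)
      (p * condMean μ {ω | T ω = true} Y + (1 - p) -
        (1 - p) * condMean μ {ω | T ω = false} Y) := by
  set A : Set Ω := {ω | T ω = true} with hA
  have hAm : MeasurableSet A := hT (measurableSet_singleton true)
  have hBc : {ω | T ω = false} = Aᶜ := by
    ext ω
    simp only [hA, Set.mem_compl_iff, Set.mem_setOf_eq]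
    exact Bool.eq_false_iff
  have hμA_ne : μ A ≠ ⊤ := (measure_lt_top μ A).ne
  have hμAc : μ Aᶜ = 1 - μ A := by
    rw [measure_compl hAm hμA_ne, measure_univ]
  have hple : μ A ≤ 1 := prob_le_one
  have hpAc : (μ Aᶜ).toReal = 1 - p := by
    rw [hμAc, ENNReal.toReal_sub_of_le hple (by simp), hp]; simp
  have hppos : 0 < p := by
    rw [hp]; exact ENNReal.toReal_pos hpos.ne' hμA_ne
  have hplt : p < 1 := by
    rw [hp]
    have := ENNReal.toReal_lt_toReal hμA_ne (by simp : (1:ENNReal) ≠ ⊤) |>.mpr hlt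
    simpa using this
  -- Y agrees with Y1 on A, with Y0 on Aᶜ
  have hYA : ∫ ω in A, Y ω ∂μ = ∫ ω in A, Y1 ω ∂μ := by
    apply setIntegral_congr_fun hAm
    intro ω hω
    have : T ω = true := hω
    simp [hY ω, this]
  have hYAc : ∫ ω in Aᶜ, Y ω ∂μ = ∫ ω in Aᶜ, Y0 ω ∂μ := by
    apply setIntegral_congr_fun hAm.compl
    intro ω hω
    have : T ω = false := by
      simp [hA, Set.mem_compl_iff] at hω; simpa using hω
    simp [hY ω, this]
  have hcondA : p * condMean μ A Y = ∫ ω in A, Y1 ω ∂μ := by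
    rw [condMean, ← hp, hYA]; field_simp
  have hcondAc : (1 - p) * condMean μ {ω | T ω = false} Y = ∫ ω in Aᶜ, Y0 ω ∂μ := by
    rw [condMean, hBc, hpAc, hYAc]
    have : (1:ℝ) - p ≠ 0 := by linarith
    field_simp
  -- split integrals
  have hsplit1 : ∫ ω, Y1 ω ∂μ = (∫ ω in A, Y1 ω ∂μ) + ∫ ω in Aᶜ, Y1 ω ∂μ :=
    (integral_add_compl hAm hY1).symm
  have hsplit0 : ∫ ω, Y0 ω ∂μ = (∫ ω in A, Y0 ω ∂μ) + ∫ ω in Aᶜ, Y0 ω ∂μ :=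
    (integral_add_compl hAm hY0).symm
  -- bounds on unobserved pieces
  have hbnd : ∀ (f : Ω → ℝ), Integrable f μ → (∀ ω, f ω = 0 ∨ f ω = 1) →
      ∀ (S : Set Ω), MeasurableSet S →
      0 ≤ (∫ ω in S, f ω ∂μ) ∧ (∫ ω in S, f ω ∂μ) ≤ (μ S).toReal := by
    intro f hf hfb S hS
    constructor
    · exact setIntegral_nonneg hS fun ω _ => by rcases hfb ω with h | h <;> simp [h]
    · calc (∫ ω in S, f ω ∂μ) ≤ ∫ ω in S, (1:ℝ) ∂μ := by
            apply setIntegral_mono_on hf.integrableOn (integrable_const 1).integrableOn hS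
            intro ω _; rcases hfb ω with h | h <;> simp [h]
      _ = (μ S).toReal := by simp; rfl
  obtain ⟨h1l, h1u⟩ := hbnd Y1 hY1 hY1b Aᶜ hAm.compl
  obtain ⟨h0l, h0u⟩ := hbnd Y0 hY0 hY0b A hAm
  rw [hpAc] at h1u
  rw [← hp] at h0u
  constructor
  · rw [hcondA, hcondAc, hsplit1, hsplit0]; linarith
  · rw [hcondA, hcondAc, hsplit1, hsplit0]; linarith
end
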